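/- arXiv:math/0606327 — 2 statements merged into one kernel-verified Lean document; each statement's English description precedes it below -/
import Mathlib

section
/- Let u_res = {a ∈ B(H) : a* = −a and [d,a] ∈ S₂(H)} and (u_res)_* = {ρ : ρ* = −ρ, [d,ρ] ∈ S₂(H), p₊ρp₊ ∈ S₁(H₊), p₋ρp₋ ∈ S₁(H₋)}. Then for every a ∈ u_res and ρ ∈ (u_res)_*, the commutator [ρ, a] belongs to (u_res)_*, i.e., (u_res)_* is an ideal-like submodule under the adjoint action of u_res. -/
open ContinuousLinearMap

noncomputable section

/-- `T` is a Hilbert–Schmidt operator: `∑ᵢ ‖T eᵢ‖² < ∞` for some Hilbert basis `(eᵢ)`. -/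
def IsHS {H : Type*} [NormedAddCommGroup H] [InnerProductSpace ℂ H]
    (T : H →L[ℂ] H) : Prop :=
  ∃ (ι : Type) (b : HilbertBasis ι ℂ H), Summable fun i => ‖T (b i)‖ ^ 2

/-- `T` is trace class: `T` is a product of two Hilbert–Schmidt operators. -/
def IsTC {H : Type*} [NormedAddCommGroup H] [InnerProductSpace ℂ H]
    (T : H →L[ℂ] H) : Prop :=
  ∃ A B : H →L[ℂ] H, IsHS A ∧ IsHS B ∧ T = A * B

/-- The operator `d = i(p₊ - p₋)` associated to the orthogonal projection `P = p₊`
(so `p₋ = 1 - P`). -/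
def dOp {H : Type*} [NormedAddCommGroup H] [InnerProductSpace ℂ H]
    (P : H →L[ℂ] H) : H →L[ℂ] H :=
  Complex.I • (P - (1 - P))


section Aux

open scoped InnerProductSpace

set_option linter.unusedSectionVars false

variable {H : Type*} [NormedAddCommGroup H] [InnerProductSpace ℂ H] [CompleteSpace H]

private lemma rpow2 (r : ℝ) : r ^ ((2 : ENNReal).toReal) = r ^ (2 : ℕ) := by
  rw [ENNReal.toReal_ofNat, show ((2:ℝ)) = ((2:ℕ):ℝ) by norm_num, Real.rpow_natCast]

lemma summable_inner_sq {ι : Type*} (b : HilbertBasis ι ℂ H) (x : H) :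
    Summable fun i => ‖⟪b i, x⟫_ℂ‖ ^ 2 := by
  have h2 := (lp.memℓp (b.repr x)).summable (p := 2) (by norm_num)
  refine h2.congr fun i => ?_
  rw [rpow2, HilbertBasis.repr_apply_apply]

lemma tsum_inner_sq {ι : Type*} (b : HilbertBasis ι ℂ H) (x : H) :
    ∑' i, ‖⟪b i, x⟫_ℂ‖ ^ 2 = ‖x‖ ^ 2 := by
  have h := lp.norm_rpow_eq_tsum (p := 2) (by norm_num) (b.repr x)
  rw [b.repr.norm_map x] at h
  rw [← rpow2 ‖x‖, h]
  exact tsum_congr fun i => by rw [rpow2, HilbertBasis.repr_apply_apply]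

lemma hs_star_at {ι κ : Type*} (b : HilbertBasis ι ℂ H) (c : HilbertBasis κ ℂ H)
    {T : H →L[ℂ] H} (hT : Summable fun i => ‖T (b i)‖ ^ 2) :
    Summable fun j => ‖(adjoint T) (c j)‖ ^ 2 := by
  have hsf : Summable (fun p : ι × κ => ‖⟪c p.2, T (b p.1)⟫_ℂ‖ ^ 2) := by
    have h := summable_prod_of_nonneg (f := fun p : ι × κ => ‖⟪c p.2, T (b p.1)⟫_ℂ‖ ^ 2)
      (fun p => pow_nonneg (norm_nonneg _) 2)
    have h1 : ∀ x : ι, Summable fun y : κ => ‖⟪c y, T (b x)⟫_ℂ‖ ^ 2 :=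
      fun i => summable_inner_sq c _
    have h2 : Summable fun x : ι => ∑' y : κ, ‖⟪c y, T (b x)⟫_ℂ‖ ^ 2 :=
      hT.congr fun i => (tsum_inner_sq c (T (b i))).symm
    exact h.2 ⟨h1, h2⟩
  have hswap : Summable (fun p : κ × ι => ‖⟪c p.1, T (b p.2)⟫_ℂ‖ ^ 2) := by
    have h := hsf.prod_symm
    exact h.congr fun p => rfl
  have h := summable_prod_of_nonneg (f := fun p : κ × ι => ‖⟪c p.1, T (b p.2)⟫_ℂ‖ ^ 2)
    (fun p => pow_nonneg (norm_nonneg _) 2)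
  have hjs : Summable fun j : κ => ∑' i : ι, ‖⟪c j, T (b i)⟫_ℂ‖ ^ 2 := (h.1 hswap).2
  refine hjs.congr fun j => ?_
  rw [← tsum_inner_sq b (adjoint T (c j))]
  exact tsum_congr fun i => by rw [← norm_inner_symm, adjoint_inner_right]

/-- An HS operator is summable-square over *every* Hilbert basis. -/
lemma IsHS.summable_any {T : H →L[ℂ] H} (hT : IsHS T) {κ : Type*} (c : HilbertBasis κ ℂ H) :
    Summable fun j => ‖T (c j)‖ ^ 2 := by
  obtain ⟨ι, b, hb⟩ := hT
  have h1 := hs_star_at b c hb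
  have h2 := hs_star_at c c h1
  rw [adjoint_adjoint] at h2
  exact h2

lemma IsHS.star {T : H →L[ℂ] H} (hT : IsHS T) : IsHS (star T) := by
  obtain ⟨ι, b, hb⟩ := hT
  rw [star_eq_adjoint]
  exact ⟨ι, b, hs_star_at b b hb⟩

lemma IsHS.smul {T : H →L[ℂ] H} (z : ℂ) (hT : IsHS T) : IsHS (z • T) := by
  obtain ⟨ι, b, hb⟩ := hT
  refine ⟨ι, b, (hb.mul_left (‖z‖ ^ 2)).congr fun i => ?_⟩
  simp [norm_smul, mul_pow]

lemma IsHS.mul_left (B : H →L[ℂ] H) {T : H →L[ℂ] H} (hT : IsHS T) : IsHS (B * T) := by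
  obtain ⟨ι, b, hb⟩ := hT
  refine ⟨ι, b, Summable.of_nonneg_of_le (fun i => pow_nonneg (norm_nonneg _) 2)
    (fun i => ?_) (hb.mul_left (‖B‖ ^ 2))⟩
  rw [← mul_pow]
  exact pow_le_pow_left₀ (norm_nonneg _) (B.le_opNorm _) 2

lemma IsHS.mul_right (B : H →L[ℂ] H) {T : H →L[ℂ] H} (hT : IsHS T) : IsHS (T * B) := by
  have h : T * B = Star.star (Star.star B * Star.star T) := by simp [star_mul]
  rw [h]
  exact ((hT.star).mul_left (Star.star B)).star

lemma IsHS.add {S T : H →L[ℂ] H} (hS : IsHS S) (hT : IsHS T) : IsHS (S + T) := by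
  obtain ⟨ι, b, hb⟩ := hS
  have hTb := hT.summable_any b
  refine ⟨ι, b, Summable.of_nonneg_of_le (fun i => pow_nonneg (norm_nonneg _) 2)
    (fun i => ?_) ((hb.mul_left 2).add (hTb.mul_left 2))⟩
  have h1 : ‖(S + T) (b i)‖ ≤ ‖S (b i)‖ + ‖T (b i)‖ := by
    rw [ContinuousLinearMap.add_apply]; exact norm_add_le _ _
  nlinarith [norm_nonneg (S (b i)), norm_nonneg (T (b i)), norm_nonneg ((S + T) (b i)),
    sq_nonneg (‖S (b i)‖ - ‖T (b i)‖), sq_nonneg (‖S (b i)‖ + ‖T (b i)‖)]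

lemma IsHS.neg {T : H →L[ℂ] H} (hT : IsHS T) : IsHS (-T) := by
  obtain ⟨ι, b, hb⟩ := hT
  exact ⟨ι, b, hb.congr fun i => by simp⟩

lemma IsHS.sub {S T : H →L[ℂ] H} (hS : IsHS S) (hT : IsHS T) : IsHS (S - T) := by
  rw [sub_eq_add_neg]; exact hS.add hT.neg

end Aux

section TC

open scoped InnerProductSpace
set_option linter.unusedSectionVars false
set_option maxHeartbeats 1000000

variable {H : Type*} [NormedAddCommGroup H] [InnerProductSpace ℂ H] [CompleteSpace H]

lemma isHS_of_finiteDimensional [FiniteDimensional ℂ H] (T : H →L[ℂ] H) : IsHS T :=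
  ⟨Fin (Module.finrank ℂ H), (stdOrthonormalBasis ℂ H).toHilbertBasis,
    (hasSum_fintype _).summable⟩

lemma exists_isometries (hfin : ¬FiniteDimensional ℂ H) :
    ∃ V W : H →L[ℂ] H, star V * V = 1 ∧ star W * W = 1 ∧ star V * W = 0 ∧ star W * V = 0 := by
  obtain ⟨s, b, hb⟩ := exists_hilbertBasis ℂ H
  haveI hinf : Infinite ↥s := by
    by_contra hfs
    haveI : Finite ↥s := not_infinite_iff_finite.mp hfs
    have hsfin : (Set.range ⇑b).Finite := Set.finite_range _
    have hclosed : IsClosed ((Submodule.span ℂ (Set.range ⇑b)) : Set H) := by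
      haveI := FiniteDimensional.span_of_finite ℂ hsfin
      exact Submodule.closed_of_finiteDimensional _
    have htop : Submodule.span ℂ (Set.range ⇑b) = ⊤ := by
      rw [← hclosed.submodule_topologicalClosure_eq]
      exact b.dense_span
    exact hfin ⟨htop ▸ Submodule.fg_span hsfin⟩
  have hcard : Cardinal.mk (↥s ⊕ ↥s) = Cardinal.mk ↥s := by
    rw [Cardinal.mk_sum]
    simp only [Cardinal.lift_id]
    exact Cardinal.add_eq_self (Cardinal.aleph0_le_mk ↥s)
  obtain ⟨e⟩ := Cardinal.eq.1 hcard
  have hON := b.orthonormal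
  set u1 : ↥s → H := ⇑b ∘ fun i : ↥s => e (Sum.inl i) with hu1def
  set u2 : ↥s → H := ⇑b ∘ fun i : ↥s => e (Sum.inr i) with hu2def
  have hu1 : Orthonormal ℂ u1 := hON.comp _ (e.injective.comp Sum.inl_injective)
  have hu2 : Orthonormal ℂ u2 := hON.comp _ (e.injective.comp Sum.inr_injective)
  set V₀ : H →ₗᵢ[ℂ] H := (hu1.orthogonalFamily.linearIsometry).comp b.repr.toLinearIsometry
    with hV₀def
  set W₀ : H →ₗᵢ[ℂ] H := (hu2.orthogonalFamily.linearIsometry).comp b.repr.toLinearIsometry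
    with hW₀def
  have hgen : ∀ i j : ↥s, ⟪u1 j, u2 i⟫_ℂ = 0 := by
    intro i j
    refine hON.2 ?_
    intro hEq
    exact Sum.inl_ne_inr (e.injective hEq)
  set U : Submodule ℂ H := Submodule.span ℂ (Set.range u1) with hUdef
  have hWmem : ∀ y : H, W₀ y ∈ Uᗮ := by
    intro y
    have hmemgen : ∀ i : ↥s, u2 i ∈ Uᗮ := by
      intro i
      rw [Submodule.mem_orthogonal]
      intro v hv
      induction hv using Submodule.span_induction with
      | mem x hx => obtain ⟨j, rfl⟩ := hx; exact hgen i j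
      | zero => exact inner_zero_left _
      | add x y hx hy ihx ihy => rw [inner_add_left, ihx, ihy, add_zero]
      | smul c x hx ihx => rw [inner_smul_left, ihx, mul_zero]
    have hsum := hu2.orthogonalFamily.hasSum_linearIsometry (b.repr y)
    refine U.isClosed_orthogonal.mem_of_tendsto hsum ?_
    filter_upwards with t
    refine Submodule.sum_mem _ fun i _ => ?_
    rw [LinearIsometry.toSpanSingleton_apply]
    exact Submodule.smul_mem _ _ (hmemgen i)
  have hVcl : ∀ x : H, V₀ x ∈ closure (U : Set H) := by
    intro x
    have hsum := hu1.orthogonalFamily.hasSum_linearIsometry (b.repr x)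
    refine mem_closure_of_tendsto hsum ?_
    filter_upwards with t
    refine Submodule.sum_mem _ fun i _ => ?_
    rw [LinearIsometry.toSpanSingleton_apply]
    exact Submodule.smul_mem _ _ (Submodule.subset_span ⟨i, rfl⟩)
  have horth : ∀ x y : H, ⟪V₀ x, W₀ y⟫_ℂ = 0 := by
    intro x y
    have hW' := (Submodule.mem_orthogonal U (W₀ y)).1 (hWmem y)
    have hC : IsClosed {v : H | ⟪v, W₀ y⟫_ℂ = 0} :=
      isClosed_eq (Continuous.inner continuous_id continuous_const) continuous_const
    exact closure_minimal (fun u hu => hW' u hu) hC (hVcl x)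
  refine ⟨V₀.toContinuousLinearMap, W₀.toContinuousLinearMap, ?_, ?_, ?_, ?_⟩
  · ext x
    refine ext_inner_left ℂ fun y => ?_
    rw [ContinuousLinearMap.mul_apply, ContinuousLinearMap.one_apply, star_eq_adjoint,
      adjoint_inner_right]
    exact V₀.inner_map_map y x
  · ext x
    refine ext_inner_left ℂ fun y => ?_
    rw [ContinuousLinearMap.mul_apply, ContinuousLinearMap.one_apply, star_eq_adjoint,
      adjoint_inner_right]
    exact W₀.inner_map_map y x
  · ext x
    refine ext_inner_left ℂ fun y => ?_
    rw [ContinuousLinearMap.mul_apply, ContinuousLinearMap.zero_apply, inner_zero_right,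
      star_eq_adjoint, adjoint_inner_right]
    exact horth y x
  · ext x
    refine ext_inner_left ℂ fun y => ?_
    rw [ContinuousLinearMap.mul_apply, ContinuousLinearMap.zero_apply, inner_zero_right,
      star_eq_adjoint, adjoint_inner_right]
    have h0 : ⟪V₀.toContinuousLinearMap x, W₀.toContinuousLinearMap y⟫_ℂ = 0 := horth x y
    rw [← inner_conj_symm, h0, map_zero]
end TC

section TCLemmas
set_option linter.unusedSectionVars false
variable {H : Type*} [NormedAddCommGroup H] [InnerProductSpace ℂ H] [CompleteSpace H]

lemma IsTC.mul_left (B : H →L[ℂ] H) {T : H →L[ℂ] H} (hT : IsTC T) : IsTC (B * T) := by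
  obtain ⟨A, C, hA, hC, rfl⟩ := hT
  exact ⟨B * A, C, hA.mul_left B, hC, by rw [mul_assoc]⟩

lemma IsTC.mul_right (B : H →L[ℂ] H) {T : H →L[ℂ] H} (hT : IsTC T) : IsTC (T * B) := by
  obtain ⟨A, C, hA, hC, rfl⟩ := hT
  exact ⟨A, C * B, hA, hC.mul_right B, by rw [mul_assoc]⟩

lemma IsTC.neg {T : H →L[ℂ] H} (hT : IsTC T) : IsTC (-T) := by
  obtain ⟨A, C, hA, hC, rfl⟩ := hT
  exact ⟨-A, C, hA.neg, hC, by rw [neg_mul]⟩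

lemma IsTC.add {S T : H →L[ℂ] H} (hS : IsTC S) (hT : IsTC T) : IsTC (S + T) := by
  by_cases hfin : FiniteDimensional ℂ H
  · exact ⟨S + T, 1, isHS_of_finiteDimensional _, isHS_of_finiteDimensional _, (mul_one _).symm⟩
  · obtain ⟨V, W, hV, hW, hVW, hWV⟩ := exists_isometries hfin
    obtain ⟨A₁, B₁, hA₁, hB₁, rfl⟩ := hS
    obtain ⟨A₂, B₂, hA₂, hB₂, rfl⟩ := hT
    refine ⟨A₁ * star V + A₂ * star W, V * B₁ + W * B₂,
      (hA₁.mul_right _).add (hA₂.mul_right _), (hB₁.mul_left _).add (hB₂.mul_left _), ?_⟩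
    have e1 : (A₁ * star V + A₂ * star W) * (V * B₁ + W * B₂)
        = A₁ * (star V * V) * B₁ + A₁ * (star V * W) * B₂
          + A₂ * (star W * V) * B₁ + A₂ * (star W * W) * B₂ := by noncomm_ring
    rw [e1, hV, hW, hVW, hWV]
    simp

lemma IsTC.sub {S T : H →L[ℂ] H} (hS : IsTC S) (hT : IsTC T) : IsTC (S - T) := by
  rw [sub_eq_add_neg]; exact hS.add hT.neg

/-- The corner-splitting identity for an idempotent. -/
lemma corner_split (p : H →L[ℂ] H) (hp : p * p = p) (x y : H →L[ℂ] H) :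
    p * (x * y) * p = (p * x * p) * (p * y * p) + (p * x * (1 - p)) * ((1 - p) * y * p) := by
  have h1 : (1 - p) * (1 - p) = 1 - p := by
    simp only [sub_mul, mul_sub, one_mul, mul_one, hp]
    abel
  have e1 : (p * x * p) * (p * y * p) = p * (x * ((p * p) * y)) * p := by noncomm_ring
  have e2 : (p * x * (1 - p)) * ((1 - p) * y * p)
      = p * (x * (((1 - p) * (1 - p)) * y)) * p := by noncomm_ring
  rw [e1, e2, hp, h1]
  have e3 : p * (x * (p * y)) * p + p * (x * ((1 - p) * y)) * p
      = p * (x * ((p + (1 - p)) * y)) * p := by noncomm_ring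
  rw [e3, add_sub_cancel]
  noncomm_ring

lemma off1 (p : H →L[ℂ] H) (hp : p * p = p) (x : H →L[ℂ] H) :
    p * x * (1 - p) = p * (p * x - x * p) * (1 - p) := by
  have hp0 : p * (1 - p) = 0 := by simp [mul_sub, hp]
  have e : p * (p * x - x * p) * (1 - p) = (p * p) * x * (1 - p) - p * x * (p * (1 - p)) := by
    noncomm_ring
  rw [e, hp, hp0, mul_zero, sub_zero]

lemma off2 (p : H →L[ℂ] H) (hp : p * p = p) (x : H →L[ℂ] H) :
    (1 - p) * x * p = -((1 - p) * (p * x - x * p) * p) := by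
  have hp0 : (1 - p) * p = 0 := by simp [sub_mul, hp]
  have e : (1 - p) * (p * x - x * p) * p = ((1 - p) * p) * (x * p) - (1 - p) * x * (p * p) := by
    noncomm_ring
  rw [e, hp, hp0, zero_mul, zero_sub, neg_neg]

lemma corner_tc (p : H →L[ℂ] H) (hp : p * p = p) (x y : H →L[ℂ] H)
    (hx1 : IsHS (p * x * (1 - p))) (hx2 : IsHS ((1 - p) * x * p))
    (hy1 : IsHS (p * y * (1 - p))) (hy2 : IsHS ((1 - p) * y * p))
    (hxc : IsTC (p * x * p)) : IsTC (p * (x * y - y * x) * p) := by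
  have hsplit : p * (x * y - y * x) * p
      = ((p * x * p) * (p * y * p) + (p * x * (1 - p)) * ((1 - p) * y * p))
        - ((p * y * p) * (p * x * p) + (p * y * (1 - p)) * ((1 - p) * x * p)) := by
    have h1 := corner_split p hp x y
    have h2 := corner_split p hp y x
    have e : p * (x * y - y * x) * p = p * (x * y) * p - p * (y * x) * p := by noncomm_ring
    rw [e, h1, h2]
  rw [hsplit]
  exact ((hxc.mul_right _).add ⟨_, _, hx1, hy2, rfl⟩).sub
    ((hxc.mul_left _).add ⟨_, _, hy1, hx2, rfl⟩)

lemma dOp_comm (P x : H →L[ℂ] H) :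
    dOp P * x - x * dOp P = (2 * Complex.I) • (P * x - x * P) := by
  simp only [dOp, smul_mul_assoc, mul_smul_comm, sub_mul, mul_sub, one_mul, mul_one]
  module

end TCLemmas

/-- The predual `(u_res)_*` is invariant under commutators with elements of `u_res`. -/
theorem stmt9 {H : Type*} [NormedAddCommGroup H] [InnerProductSpace ℂ H] [CompleteSpace H]
    (P : H →L[ℂ] H) (hP : IsSelfAdjoint P) (hP2 : P * P = P)
    (a ρ : H →L[ℂ] H)
    (ha1 : star a = -a) (ha2 : IsHS (dOp P * a - a * dOp P))
    (hρ1 : star ρ = -ρ) (hρ2 : IsHS (dOp P * ρ - ρ * dOp P))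
    (hρ3 : IsTC (P * ρ * P)) (hρ4 : IsTC ((1 - P) * ρ * (1 - P))) :
    star (ρ * a - a * ρ) = -(ρ * a - a * ρ) ∧
    IsHS (dOp P * (ρ * a - a * ρ) - (ρ * a - a * ρ) * dOp P) ∧
    IsTC (P * (ρ * a - a * ρ) * P) ∧
    IsTC ((1 - P) * (ρ * a - a * ρ) * (1 - P)) := by
  have h2I : (2 * Complex.I) ≠ 0 := by simp [Complex.I_ne_zero]
  have hKdef : P * ρ - ρ * P = (2 * Complex.I)⁻¹ • (dOp P * ρ - ρ * dOp P) := by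
    rw [dOp_comm, smul_smul, inv_mul_cancel₀ h2I, one_smul]
  have hLdef : P * a - a * P = (2 * Complex.I)⁻¹ • (dOp P * a - a * dOp P) := by
    rw [dOp_comm, smul_smul, inv_mul_cancel₀ h2I, one_smul]
  have hK : IsHS (P * ρ - ρ * P) := by rw [hKdef]; exact hρ2.smul _
  have hL : IsHS (P * a - a * P) := by rw [hLdef]; exact ha2.smul _
  refine ⟨?_, ?_, ?_, ?_⟩
  · rw [star_sub, star_mul, star_mul, ha1, hρ1]
    noncomm_ring
  · rw [dOp_comm]
    refine IsHS.smul _ ?_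
    have e : P * (ρ * a - a * ρ) - (ρ * a - a * ρ) * P
        = ((P * ρ - ρ * P) * a - a * (P * ρ - ρ * P))
          + (ρ * (P * a - a * P) - (P * a - a * P) * ρ) := by noncomm_ring
    rw [e]
    exact ((hK.mul_right a).sub (hK.mul_left a)).add ((hL.mul_left ρ).sub (hL.mul_right ρ))
  · refine corner_tc P hP2 ρ a ?_ ?_ ?_ ?_ hρ3
    · rw [off1 P hP2 ρ]; exact (hK.mul_left P).mul_right (1 - P)
    · rw [off2 P hP2 ρ]; exact ((hK.mul_left (1 - P)).mul_right P).neg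
    · rw [off1 P hP2 a]; exact (hL.mul_left P).mul_right (1 - P)
    · rw [off2 P hP2 a]; exact ((hL.mul_left (1 - P)).mul_right P).neg
  · have hQ2 : (1 - P) * (1 - P) = 1 - P := by
      simp only [sub_mul, mul_sub, one_mul, mul_one, hP2]; abel
    have hK' : IsHS ((1 - P) * ρ - ρ * (1 - P)) := by
      have e : (1 - P) * ρ - ρ * (1 - P) = -(P * ρ - ρ * P) := by noncomm_ring
      rw [e]; exact hK.neg
    have hL' : IsHS ((1 - P) * a - a * (1 - P)) := by
      have e : (1 - P) * a - a * (1 - P) = -(P * a - a * P) := by noncomm_ring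
      rw [e]; exact hL.neg
    refine corner_tc (1 - P) hQ2 ρ a ?_ ?_ ?_ ?_ hρ4
    · rw [off1 (1 - P) hQ2 ρ]; exact (hK'.mul_left _).mul_right _
    · rw [off2 (1 - P) hQ2 ρ]; exact ((hK'.mul_left _).mul_right _).neg
    · rw [off1 (1 - P) hQ2 a]; exact (hL'.mul_left _).mul_right _
    · rw [off2 (1 - P) hQ2 a]; exact ((hL'.mul_left _).mul_right _).neg
end
end

section
/- With the basis and set J as above, there is no unitary g ∈ U_res (i.e., with off-diagonal blocks Hilbert–Schmidt) such that gJg⁻¹ is contained in the algebra of diagonal operators. Consequently, the Cartan subalgebras of u_res are not all conjugate under U_res. -/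
open ContinuousLinearMap

noncomputable section

/-- Index type `ℤ* = ℤ \ {0}` for the basis `{eₙ}` of `H`. -/
abbrev Zstar := {n : ℤ // n ≠ 0}

/-- Negation on `ℤ*`. -/
def negZ (n : Zstar) : Zstar := ⟨-n.1, neg_ne_zero.mpr n.2⟩

section Aux

local notation "⟪" x ", " y "⟫" => @inner ℂ _ _ x y

variable {H : Type*} [NormedAddCommGroup H] [InnerProductSpace ℂ H] [CompleteSpace H]

set_option linter.unusedSectionVars false

lemma parseval' {ι : Type*} (c : HilbertBasis ι ℂ H) (x : H) :
    HasSum (fun i => ‖⟪c i, x⟫‖ ^ 2) (‖x‖ ^ 2) := by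
  have h := (c.hasSum_inner_mul_inner x x).mapL Complex.reCLM
  convert h using 2 with i
  · rw [← inner_conj_symm x (c i)]
    simp only [Complex.reCLM_apply, Complex.mul_re, Complex.conj_re, Complex.conj_im,
      Complex.sq_norm, Complex.normSq_apply]
    ring
  · rw [show ((‖x‖ : ℝ) ^ 2) = RCLike.re (⟪x, x⟫) from (inner_self_eq_norm_sq x).symm]
    simp [RCLike.re_to_complex]

lemma hs_transfer {ι κ : Type*} (c : HilbertBasis ι ℂ H) (d : HilbertBasis κ ℂ H)
    {T : H →L[ℂ] H} (h : Summable fun i => ‖T (c i)‖ ^ 2) :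
    Summable fun j => ‖(ContinuousLinearMap.adjoint T) (d j)‖ ^ 2 := by
  set f : ι × κ → ℝ := fun p => ‖⟪d p.2, T (c p.1)⟫‖ ^ 2 with hf
  have hnn : 0 ≤ f := fun p => sq_nonneg _
  have hrow : ∀ i, HasSum (fun j => f (i, j)) (‖T (c i)‖ ^ 2) := fun i => parseval' d (T (c i))
  have hsf : Summable f := by
    rw [summable_prod_of_nonneg hnn]
    refine ⟨fun i => (hrow i).summable, ?_⟩
    convert h using 1
    funext i
    exact (hrow i).tsum_eq
  have hswap : Summable fun q : κ × ι => f q.swap := hsf.prod_symm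
  have h2 := ((summable_prod_of_nonneg (f := fun q : κ × ι => f q.swap)
    (fun q => hnn _)).1 hswap).2
  convert h2 using 1
  funext j
  have hcol : HasSum (fun i => f (i, j)) (‖(ContinuousLinearMap.adjoint T) (d j)‖ ^ 2) := by
    have hp := parseval' c ((ContinuousLinearMap.adjoint T) (d j))
    convert hp using 2 with i
    simp only [hf]
    rw [← ContinuousLinearMap.adjoint_inner_left, norm_inner_symm]
  rw [← hcol.tsum_eq]
  rfl

lemma isHS_summable {κ : Type*} (b : HilbertBasis κ ℂ H) (T : H →L[ℂ] H) (h : IsHS T) :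
    Summable fun j => ‖T (b j)‖ ^ 2 := by
  obtain ⟨ι, c, hc⟩ := h
  have h1 := hs_transfer c b hc
  have h2 := hs_transfer b b h1
  simpa [ContinuousLinearMap.adjoint_adjoint] using h2

lemma negZ_negZ (n : Zstar) : negZ (negZ n) = n := Subtype.ext (neg_neg _)

end Aux

/-- There is no unitary `g ∈ U_res` conjugating the abelian algebra
`J = {J ∈ u_res : J eₙ ∈ ℝ e₋ₙ}` into the diagonal operators; hence the Cartan subalgebras of
`u_res` are not all conjugate under `U_res`. -/
theorem stmt15 {H : Type*} [NormedAddCommGroup H] [InnerProductSpace ℂ H] [CompleteSpace H]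
    (P : H →L[ℂ] H) (hP : IsSelfAdjoint P) (hP2 : P * P = P)
    (b : HilbertBasis Zstar ℂ H)
    (hb : ∀ n : Zstar, (n.1 < 0 → P (b n) = b n) ∧ (0 < n.1 → P (b n) = 0)) :
    ¬ ∃ g : H →L[ℂ] H, g ∈ unitary (H →L[ℂ] H) ∧
        IsHS (P * g * (1 - P)) ∧ IsHS ((1 - P) * g * P) ∧
        ∀ J : H →L[ℂ] H,
          (star J = -J ∧ IsHS (dOp P * J - J * dOp P) ∧
            ∀ n : Zstar, ∃ r : ℝ, J (b n) = (r : ℂ) • b (negZ n)) →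
          ∀ n : Zstar, ∃ c : ℂ, (g * J * star g) (b n) = c • b n := by
  rintro ⟨g, hg, hA, hB, hcon⟩
  obtain ⟨hg1, hg2⟩ := Unitary.mem_iff.mp hg
  have hON : ∀ i j : Zstar, @inner ℂ _ _ (b i) (b j) = if i = j then (1 : ℂ) else 0 :=
    fun i j => orthonormal_iff_ite.mp b.orthonormal i j
  have hPadj : ContinuousLinearMap.adjoint P = P := by
    rw [← ContinuousLinearMap.star_eq_adjoint]; exact hP
  -- `g` preserves norms
  have hgnorm : ∀ x : H, ‖g x‖ = ‖x‖ := by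
    intro x
    have h0 : star g (g x) = x := by
      have := congrFun (congrArg (DFunLike.coe) hg1) x
      simpa [ContinuousLinearMap.mul_apply] using this
    have h1 : @inner ℂ _ _ (g x) (g x) = @inner ℂ _ _ x x := by
      calc @inner ℂ _ _ (g x) (g x)
          = @inner ℂ _ _ x ((ContinuousLinearMap.adjoint g) (g x)) := by
            rw [ContinuousLinearMap.adjoint_inner_right]
        _ = @inner ℂ _ _ x x := by rw [← ContinuousLinearMap.star_eq_adjoint, h0]
    have h2 : (‖g x‖ : ℝ) ^ 2 = ‖x‖ ^ 2 := by
      have := congrArg Complex.re h1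
      rwa [show (@inner ℂ _ _ (g x) (g x)).re = RCLike.re (@inner ℂ _ _ (g x) (g x)) from rfl,
        show (@inner ℂ _ _ x x).re = RCLike.re (@inner ℂ _ _ x x) from rfl,
        inner_self_eq_norm_sq, inner_self_eq_norm_sq] at this
    calc ‖g x‖ = Real.sqrt (‖g x‖ ^ 2) := (Real.sqrt_sq (norm_nonneg _)).symm
      _ = Real.sqrt (‖x‖ ^ 2) := by rw [h2]
      _ = ‖x‖ := Real.sqrt_sq (norm_nonneg _)
  -- coordinates of `P x`
  have hcP : ∀ (x : H) (m : Zstar),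
      @inner ℂ _ _ (b m) (P x) = if m.1 < 0 then @inner ℂ _ _ (b m) x else 0 := by
    intro x m
    have : @inner ℂ _ _ (b m) (P x) = @inner ℂ _ _ (P (b m)) x := by
      conv_rhs => rw [← hPadj]
      rw [ContinuousLinearMap.adjoint_inner_left]
    rw [this]
    rcases m.2.lt_or_gt with h | h
    · rw [(hb m).1 h, if_pos h]
    · rw [(hb m).2 h, if_neg (not_lt.mpr h.le), inner_zero_left]
  -- key computation for each positive index
  have key : ∀ n : Zstar, 0 < n.1 →
      ‖(P * g * (1 - P)) (b n)‖ ^ 2 + ‖((1 - P) * g * P) (b (negZ n))‖ ^ 2 = 1 := by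
    intro n hn
    have hnne : negZ n ≠ n := by
      intro h
      have := congrArg Subtype.val h
      simp only [negZ] at this
      omega
    set Jn : H →L[ℂ] H :=
      (innerSL ℂ (b n)).smulRight (b (negZ n)) - (innerSL ℂ (b (negZ n))).smulRight (b n)
      with hJn
    have hJapp : ∀ x, Jn x
        = @inner ℂ _ _ (b n) x • b (negZ n) - @inner ℂ _ _ (b (negZ n)) x • b n := by
      intro x; simp [hJn]
    have hJbn : Jn (b n) = b (negZ n) := by
      rw [hJapp, hON n n, hON (negZ n) n, if_pos rfl, if_neg hnne]
      simp
    have hJbnn : Jn (b (negZ n)) = -(b n) := by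
      rw [hJapp, hON n (negZ n), hON (negZ n) (negZ n), if_pos rfl, if_neg (Ne.symm hnne)]
      simp
    have hJother : ∀ m : Zstar, m ≠ n → m ≠ negZ n → Jn (b m) = 0 := by
      intro m h1 h2
      rw [hJapp, hON n m, hON (negZ n) m, if_neg (Ne.symm h1), if_neg (Ne.symm h2)]
      simp
    -- skew-adjointness
    have hskew : star Jn = -Jn := by
      rw [ContinuousLinearMap.star_eq_adjoint]
      refine (((ContinuousLinearMap.eq_adjoint_iff (-Jn) Jn).mpr ?_).symm)
      intro x y
      simp only [ContinuousLinearMap.neg_apply, hJapp, inner_sub_left, inner_sub_right,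
        inner_smul_left, inner_smul_right, inner_neg_left, inner_conj_symm]
      ring
    -- `dOp P` acts diagonally on the basis
    have hd : ∀ m : Zstar, ∃ cm : ℂ, dOp P (b m) = cm • b m := by
      intro m
      rcases m.2.lt_or_gt with h | h
      · refine ⟨Complex.I, ?_⟩
        simp [dOp, ContinuousLinearMap.smul_apply, ContinuousLinearMap.sub_apply,
          ContinuousLinearMap.one_apply, (hb m).1 h]
      · refine ⟨-Complex.I, ?_⟩
        simp [dOp, ContinuousLinearMap.smul_apply, ContinuousLinearMap.sub_apply,
          ContinuousLinearMap.one_apply, (hb m).2 h]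
    -- the commutator is finite rank, hence HS
    have hcomm : IsHS (dOp P * Jn - Jn * dOp P) := by
      refine ⟨Zstar, b, summable_of_ne_finset_zero (s := {n, negZ n}) ?_⟩
      intro m hm
      simp only [Finset.mem_insert, Finset.mem_singleton, not_or] at hm
      obtain ⟨cm, hcm⟩ := hd m
      have h0 : (dOp P * Jn - Jn * dOp P) (b m) = 0 := by
        rw [ContinuousLinearMap.sub_apply, ContinuousLinearMap.mul_apply,
          ContinuousLinearMap.mul_apply, hJother m hm.1 hm.2, hcm, map_zero, map_smul,
          hJother m hm.1 hm.2, smul_zero, sub_zero]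
      rw [h0]
      simp
    -- real coordinates condition
    have hcoords : ∀ m : Zstar, ∃ r : ℝ, Jn (b m) = (r : ℂ) • b (negZ m) := by
      intro m
      by_cases h1 : m = n
      · subst h1; exact ⟨1, by rw [hJbn]; simp⟩
      by_cases h2 : m = negZ n
      · subst h2
        refine ⟨-1, ?_⟩
        rw [hJbnn, negZ_negZ]
        norm_num
      · exact ⟨0, by rw [hJother m h1 h2]; simp⟩
    have hdiag := hcon Jn ⟨hskew, hcomm, hcoords⟩
    -- conjugated operator and its skewness
    have hKskew : star (g * Jn * star g) = -(g * Jn * star g) := by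
      rw [star_mul, star_mul, star_star, hskew]
      simp [mul_assoc]
    set u := g (b n) with hu
    set v := g (b (negZ n)) with hv
    have hstarg : ∀ x : H, star g (g x) = x := by
      intro x
      have := congrFun (congrArg (DFunLike.coe) hg1) x
      simpa [ContinuousLinearMap.mul_apply] using this
    have hKu : (g * Jn * star g) u = v := by
      rw [ContinuousLinearMap.mul_apply, ContinuousLinearMap.mul_apply, hu, hstarg, hJbn, hv]
    have hKv : (g * Jn * star g) v = -u := by
      rw [ContinuousLinearMap.mul_apply, ContinuousLinearMap.mul_apply, hv, hstarg, hJbnn,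
        map_neg, hu]
    -- coefficientwise: |⟪bₘ,u⟫| = |⟪bₘ,v⟫|
    have hcoeff : ∀ m : Zstar, ‖@inner ℂ _ _ (b m) u‖ = ‖@inner ℂ _ _ (b m) v‖ := by
      intro m
      obtain ⟨c, hc⟩ := hdiag m
      have hKadj : ∀ x : H, @inner ℂ _ _ (b m) ((g * Jn * star g) x)
          = -(starRingEnd ℂ) c * @inner ℂ _ _ (b m) x := by
        intro x
        calc @inner ℂ _ _ (b m) ((g * Jn * star g) x)
            = @inner ℂ _ _ ((ContinuousLinearMap.adjoint (g * Jn * star g)) (b m)) x :=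
              (ContinuousLinearMap.adjoint_inner_left _ x (b m)).symm
          _ = -(starRingEnd ℂ) c * @inner ℂ _ _ (b m) x := by
              rw [← ContinuousLinearMap.star_eq_adjoint, hKskew,
                ContinuousLinearMap.neg_apply, hc, inner_neg_left, inner_smul_left]
              ring
      have h1 : @inner ℂ _ _ (b m) v = -(starRingEnd ℂ) c * @inner ℂ _ _ (b m) u := by
        rw [← hKu]; exact hKadj u
      have h2 : -(@inner ℂ _ _ (b m) u) = -(starRingEnd ℂ) c * @inner ℂ _ _ (b m) v := by
        rw [← inner_neg_right, ← hKv]; exact hKadj v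
      have e1 : ‖@inner ℂ _ _ (b m) v‖ = ‖c‖ * ‖@inner ℂ _ _ (b m) u‖ := by
        rw [h1]; simp [norm_mul]
      have e2 : ‖@inner ℂ _ _ (b m) u‖ = ‖c‖ * ‖@inner ℂ _ _ (b m) v‖ := by
        rw [show ‖@inner ℂ _ _ (b m) u‖ = ‖-(@inner ℂ _ _ (b m) u)‖ from (norm_neg _).symm, h2]
        simp [norm_mul]
      have hz : (‖@inner ℂ _ _ (b m) u‖ - ‖@inner ℂ _ _ (b m) v‖) * (1 + ‖c‖) = 0 := by
        linear_combination e2 - e1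
      rcases mul_eq_zero.mp hz with h | h
      · linarith
      · have : (0 : ℝ) ≤ ‖c‖ := norm_nonneg _
        linarith
    -- Parseval bookkeeping
    have hs1 := parseval' b (P u)
    have hs2 := parseval' b ((1 - P) v)
    have hsv := parseval' b v
    have hfun : (fun m : Zstar => ‖@inner ℂ _ _ (b m) (P u)‖ ^ 2
        + ‖@inner ℂ _ _ (b m) ((1 - P) v)‖ ^ 2)
        = fun m : Zstar => ‖@inner ℂ _ _ (b m) v‖ ^ 2 := by
      funext m
      have hq : @inner ℂ _ _ (b m) ((1 - P) v)
          = @inner ℂ _ _ (b m) v - @inner ℂ _ _ (b m) (P v) := by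
        rw [ContinuousLinearMap.sub_apply, ContinuousLinearMap.one_apply, inner_sub_right]
      rw [hcP u m, hq, hcP v m]
      by_cases h : m.1 < 0
      · rw [if_pos h, if_pos h]
        simp [hcoeff m]
      · rw [if_neg h, if_neg h]
        simp
    have hsum : HasSum (fun m : Zstar => ‖@inner ℂ _ _ (b m) v‖ ^ 2)
        (‖P u‖ ^ 2 + ‖(1 - P) v‖ ^ 2) := by
      have h12 := hs1.add hs2
      rwa [hfun] at h12
    have hvnorm : ‖v‖ = 1 := by
      rw [hv, hgnorm]; exact b.orthonormal.1 (negZ n)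
    have htotal : ‖P u‖ ^ 2 + ‖(1 - P) v‖ ^ 2 = 1 := by
      have := hsum.unique hsv
      rw [this, hvnorm]; norm_num
    have hAn : (P * g * (1 - P)) (b n) = P u := by
      rw [ContinuousLinearMap.mul_apply, ContinuousLinearMap.mul_apply,
        ContinuousLinearMap.sub_apply, ContinuousLinearMap.one_apply, (hb n).2 hn, sub_zero, hu]
    have hBn : ((1 - P) * g * P) (b (negZ n)) = (1 - P) v := by
      have hneg : (negZ n).1 < 0 := by
        show -n.1 < 0; omega
      rw [ContinuousLinearMap.mul_apply, ContinuousLinearMap.mul_apply,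
        (hb (negZ n)).1 hneg, hv]
    rw [hAn, hBn]
    exact htotal
  -- summability contradiction
  have hAs := isHS_summable b _ hA
  have hBs := isHS_summable b _ hB
  have hei : Function.Injective (fun k : ℕ => (⟨(k : ℤ) + 1, by omega⟩ : Zstar)) := by
    intro a c h
    have := congrArg Subtype.val h
    simpa using this
  have hei2 : Function.Injective (fun k : ℕ => negZ (⟨(k : ℤ) + 1, by omega⟩ : Zstar)) := by
    intro a c h
    have := congrArg Subtype.val h
    simp only [negZ] at this
    omega
  have S1 : Summable fun k : ℕ =>
      ‖(P * g * (1 - P)) (b ⟨(k : ℤ) + 1, by omega⟩)‖ ^ 2 := hAs.comp_injective hei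
  have S2 : Summable fun k : ℕ =>
      ‖((1 - P) * g * P) (b (negZ ⟨(k : ℤ) + 1, by omega⟩))‖ ^ 2 := hBs.comp_injective hei2
  have S := S1.add S2
  have hone : (fun k : ℕ => ‖(P * g * (1 - P)) (b ⟨(k : ℤ) + 1, by omega⟩)‖ ^ 2
      + ‖((1 - P) * g * P) (b (negZ ⟨(k : ℤ) + 1, by omega⟩))‖ ^ 2) = fun _ : ℕ => (1 : ℝ) :=
    funext fun k => key ⟨(k : ℤ) + 1, by omega⟩ (by positivity)
  rw [hone] at S
  have hlim := S.tendsto_atTop_zero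
  have h10 : (1 : ℝ) = 0 := tendsto_nhds_unique tendsto_const_nhds hlim
  norm_num at h10
end
end
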